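/- Let 𝕂 be a field of characteristic zero and let ℓ be a homomorphism of monoids from the positive integers under multiplication to 𝕂ˣ. Let E and L be finite groups admitting at least one surjective group homomorphism L → E, and suppose that the family of elements (ℓ(q)), where q runs over the prime divisors of |L|, is algebraically independent over ℚ (viewing ℚ as the minimal subfield of 𝕂). For surjective homomorphisms φ, ψ : L → E set I_φ = {(φ(x), x) : x ∈ L} ≤ E × L, J_ψ = {(x, ψ(x)) : x ∈ L} ≤ L × E, and let Δ(E) = {(e, e) : e ∈ E} ≤ E × E. Then the square matrix T, whose rows and columns are indexed by the surjective homomorphisms L → E and whose (φ, ψ)-entry is τ_{Δ(E)}^{I_φ, J_ψ}, has nonzero determinant, i.e., T is invertible. -/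

import Mathlib

open scoped Classical

namespace SubgroupCat

variable {R S T : Type*}

/-- The star product of subgroups `U ≤ R × S` and `V ≤ S × T`:
`U * V = {(r, t) | ∃ s, (r, s) ∈ U ∧ (s, t) ∈ V}`. -/
def starProd [Group R] [Group S] [Group T] (U : Subgroup (R × S)) (V : Subgroup (S × T)) :
    Subgroup (R × T) where
  carrier := {rt | ∃ s : S, (rt.1, s) ∈ U ∧ (s, rt.2) ∈ V}
  one_mem' := ⟨1, one_mem U, one_mem V⟩
  mul_mem' := by
    rintro a b ⟨s, hU, hV⟩ ⟨s', hU', hV'⟩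
    exact ⟨s * s', mul_mem hU hU', mul_mem hV hV'⟩
  inv_mem' := by
    rintro a ⟨s, hU, hV⟩
    exact ⟨s⁻¹, inv_mem hU, inv_mem hV⟩

@[simp] lemma mem_starProd [Group R] [Group S] [Group T] {U : Subgroup (R × S)}
    {V : Subgroup (S × T)} {p : R × T} :
    p ∈ starProd U V ↔ ∃ s : S, (p.1, s) ∈ U ∧ (s, p.2) ∈ V := Iff.rfl

/-- First projection `p₁(U) = {r | ∃ s, (r, s) ∈ U}`. -/
def p1 [Group R] [Group S] (U : Subgroup (R × S)) : Subgroup R :=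
  U.map (MonoidHom.fst R S)

/-- Second projection `p₂(U) = {s | ∃ r, (r, s) ∈ U}`. -/
def p2 [Group R] [Group S] (U : Subgroup (R × S)) : Subgroup S :=
  U.map (MonoidHom.snd R S)

/-- First kernel `k₁(U) = {r | (r, 1) ∈ U}`. -/
def k1 [Group R] [Group S] (U : Subgroup (R × S)) : Subgroup R :=
  U.comap (MonoidHom.inl R S)

/-- Second kernel `k₂(U) = {s | (1, s) ∈ U}`. -/
def k2 [Group R] [Group S] (U : Subgroup (R × S)) : Subgroup S :=
  U.comap (MonoidHom.inr R S)

/-- The Möbius function of a finite poset: `pmoeb u i` is `möb(u, i)`. -/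
noncomputable def pmoeb {P : Type*} [PartialOrder P] [Finite P] (u i : P) : ℤ :=
  if u = i then 1
  else if u < i then
    - ∑ v ∈ ({v : P | u < v ∧ v ≤ i}.toFinite.toFinset).attach, pmoeb v.1 i
  else 0
termination_by Nat.card {w : P // u ≤ w}
decreasing_by
  · have hv := v.2
    rw [Set.Finite.mem_toFinset] at hv
    have hlt : u < (v : P) := hv.1
    have hsub : {w : P | (v : P) ≤ w} ⊂ {w : P | u ≤ w} :=
      ⟨fun w hw => le_trans hlt.le hw,
       fun hcon => absurd (hcon (le_refl u)) (by exact fun h => lt_irrefl u (lt_of_lt_of_le (hlt : u < (v : P)) h))⟩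
    rw [show {w : P // (v : P) ≤ w} = ↑{w : P | (v : P) ≤ w} from rfl,
      show {w : P // u ≤ w} = ↑{w : P | u ≤ w} from rfl,
      Nat.card_coe_set_eq, Nat.card_coe_set_eq]
    exact Set.ncard_lt_ncard hsub (Set.toFinite _)

/-- `möb(U, I)` for subgroups of a finite group: the Möbius function of the
subgroup lattice. -/
noncomputable def moeb {G : Type*} [Group G] [Finite G] (U I : Subgroup G) : ℤ :=
  pmoeb U I

/-- `ℓ(A) = ℓ(|A|)` for a finite group `A`, where `ℓ : ℕ⁺ →* 𝕂ˣ`. -/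
noncomputable def ellG {𝕂 : Type*} [Field 𝕂] (ℓ : ℕ+ →* 𝕂ˣ) (A : Type*) [Group A] [Finite A] :
    𝕂 :=
  (ℓ ⟨Nat.card A, Nat.card_pos⟩ : 𝕂ˣ)

/-- The cocycle `σ(U, V) = ℓ(k₂(U) ∩ k₁(V))`. -/
noncomputable def sigmaC {𝕂 : Type*} [Field 𝕂] (ℓ : ℕ+ →* 𝕂ˣ)
    {F G H : Type*} [Group F] [Group G] [Group H] [Finite G]
    (U : Subgroup (F × G)) (V : Subgroup (G × H)) : 𝕂 :=
  ellG ℓ ↑(k2 U ⊓ k1 V)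

/-- `τ_K^{I,J} = ∑ möb(U,I) · möb(V,J) · σ(U,V)`, the sum being over all pairs
of subgroups `(U, V)` with `U ≤ I`, `V ≤ J` and `K ≤ U * V`. -/
noncomputable def tau {𝕂 : Type*} [Field 𝕂] (ℓ : ℕ+ →* 𝕂ˣ)
    {F G H : Type*} [Group F] [Group G] [Group H] [Finite F] [Finite G] [Finite H]
    (I : Subgroup (F × G)) (J : Subgroup (G × H)) (K : Subgroup (F × H)) : 𝕂 :=
  ∑ᶠ q ∈ {q : Subgroup (F × G) × Subgroup (G × H) |
      q.1 ≤ I ∧ q.2 ≤ J ∧ K ≤ starProd q.1 q.2},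
    (moeb q.1 I : 𝕂) * (moeb q.2 J : 𝕂) * sigmaC ℓ q.1 q.2

/-- The subgroup `{(f x, x) : x ∈ L}` of `E × L`, the graph of `f : L →* E`. -/
def graphL {E L : Type*} [Group E] [Group L] (f : L →* E) : Subgroup (E × L) :=
  (f.prod (MonoidHom.id L)).range

/-- The subgroup `{(x, f x) : x ∈ L}` of `L × E`, the graph of `f : L →* E`. -/
def graphR {E L : Type*} [Group E] [Group L] (f : L →* E) : Subgroup (L × E) :=
  ((MonoidHom.id L).prod f).range

/-- The diagonal subgroup `Δ(E) = {(e, e)} ≤ E × E`. -/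
def diagSubgroup (E : Type*) [Group E] : Subgroup (E × E) :=
  graphL (MonoidHom.id E)

instance {E L : Type*} [Group E] [Group L] [Finite E] [Finite L] : Finite (L →* E) :=
  Finite.of_injective (fun f => (f : L → E)) DFunLike.coe_injective

noncomputable instance {E L : Type*} [Group E] [Group L] [Finite E] [Finite L] :
    Fintype {f : L →* E // Function.Surjective f} :=
  Fintype.ofFinite _

noncomputable instance {E L : Type*} [Group E] [Group L] :
    DecidableEq {f : L →* E // Function.Surjective f} :=
  Classical.decEq _


/-! ### Auxiliary lemmas -/

section AuxNat

lemma pmoeb_self {P : Type*} [PartialOrder P] [Finite P] (u : P) : pmoeb u u = 1 := by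
  rw [pmoeb]; simp

lemma moeb_self {G : Type*} [Group G] [Finite G] (I : Subgroup G) : moeb I I = 1 :=
  pmoeb_self I

lemma sub_eq_of_le_card {G : Type*} [Group G] [Finite G] {A B : Subgroup G} (h : A ≤ B)
    (hc : Nat.card B ≤ Nat.card A) : A = B := by
  have := Set.eq_of_subset_of_ncard_le (show (A : Set G) ⊆ B from h)
    (by rwa [← Nat.card_coe_set_eq, ← Nat.card_coe_set_eq]) (Set.toFinite _)
  exact SetLike.coe_injective this

/-- `Ω n`, the number of prime factors of `n` counted with multiplicity. -/
noncomputable def Om (n : ℕ) : ℕ := (Nat.factorization n).sum fun _ k => k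

lemma Om_mul {a b : ℕ} (ha : a ≠ 0) (hb : b ≠ 0) : Om (a * b) = Om a + Om b := by
  unfold Om
  rw [Nat.factorization_mul ha hb, Finsupp.sum_add_index] <;> simp

lemma Om_pos {k : ℕ} (hk : 2 ≤ k) : 1 ≤ Om k := by
  obtain ⟨q, hq, hdvd⟩ := Nat.exists_prime_and_dvd (by omega : k ≠ 1)
  have hk0 : k ≠ 0 := by omega
  have hmem : q ∈ (Nat.factorization k).support := by
    rw [Nat.support_factorization, Nat.mem_primeFactors]
    exact ⟨hq, hdvd, hk0⟩
  calc 1 ≤ (Nat.factorization k) q := Nat.Prime.factorization_pos_of_dvd hq hk0 hdvd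
    _ ≤ Om k := Finset.single_le_sum (f := fun q => (Nat.factorization k) q)
        (by intros; positivity) hmem

lemma Om_le_of_dvd {d m : ℕ} (hm : m ≠ 0) (h : d ∣ m) : Om d ≤ Om m := by
  obtain ⟨k, rfl⟩ := h
  have hd : d ≠ 0 := by rintro rfl; simp at hm
  have hk : k ≠ 0 := by rintro rfl; simp at hm
  rw [Om_mul hd hk]; omega

lemma Om_lt_of_dvd_ne {d m : ℕ} (hm : m ≠ 0) (h : d ∣ m) (hne : d ≠ m) : Om d < Om m := by
  obtain ⟨k, rfl⟩ := h
  have hd : d ≠ 0 := by rintro rfl; simp at hm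
  have hk : k ≠ 0 := by rintro rfl; simp at hm
  have hk2 : 2 ≤ k := by
    rcases Nat.lt_or_ge k 2 with h2 | h2
    · interval_cases k <;> simp_all
    · exact h2
  have := Om_pos hk2
  rw [Om_mul hd hk]; omega

variable {N : ℕ}

lemma finite_primes (hN : N ≠ 0) : Finite {q : ℕ // q.Prime ∧ q ∣ N} := by
  apply Finite.of_injective
    (fun q => (⟨q.1, Nat.lt_succ_of_le (Nat.le_of_dvd (Nat.pos_of_ne_zero hN) q.2.2)⟩ : Fin (N+1)))
  intro a b h
  apply Subtype.ext
  simpa [Fin.ext_iff] using h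

variable [Fintype {q : ℕ // q.Prime ∧ q ∣ N}]

/-- The multidegree (exponent vector) attached to a divisor of `N`. -/
noncomputable def facS (N n : ℕ) [Fintype {q : ℕ // q.Prime ∧ q ∣ N}] :
    {q : ℕ // q.Prime ∧ q ∣ N} →₀ ℕ :=
  Finsupp.equivFunOnFinite.symm (fun q => (Nat.factorization n) q.1)

@[simp] lemma facS_apply (n : ℕ) (q : {q : ℕ // q.Prime ∧ q ∣ N}) :
    facS N n q = (Nat.factorization n) q.1 := rfl

lemma prod_primes_eq {M : Type*} [CommMonoid M] (f : ℕ → M) (hN : N ≠ 0) {n : ℕ}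
    (hn : n ≠ 0) (hd : n ∣ N)
    (hf : ∀ p, (Nat.factorization n) p = 0 → f p = 1) :
    ∏ q : {q : ℕ // q.Prime ∧ q ∣ N}, f q.1 = ∏ p ∈ n.primeFactors, f p := by
  rw [← Finset.prod_subtype N.primeFactors
    (p := fun q => q.Prime ∧ q ∣ N) (fun q => by simp [Nat.mem_primeFactors, hN]) f]
  symm
  apply Finset.prod_subset (Nat.primeFactors_mono hd hN)
  intro p _ hp
  apply hf
  rw [Nat.mem_primeFactors] at hp
  push_neg at hp
  rcases Nat.eq_zero_or_pos ((Nat.factorization n) p) with h | h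
  · exact h
  · exfalso
    have hprime : p.Prime := Nat.prime_of_mem_primeFactors
      (Nat.support_factorization n ▸ Finsupp.mem_support_iff.mpr (by omega))
    exact hn (hp hprime ((Nat.dvd_of_factorization_pos (by omega))))

lemma sum_primes_eq {M : Type*} [AddCommMonoid M] (f : ℕ → M) (hN : N ≠ 0) {n : ℕ}
    (hn : n ≠ 0) (hd : n ∣ N)
    (hf : ∀ p, (Nat.factorization n) p = 0 → f p = 0) :
    ∑ q : {q : ℕ // q.Prime ∧ q ∣ N}, f q.1 = ∑ p ∈ n.primeFactors, f p := by
  rw [← Finset.sum_subtype N.primeFactors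
    (p := fun q => q.Prime ∧ q ∣ N) (fun q => by simp [Nat.mem_primeFactors, hN]) f]
  symm
  apply Finset.sum_subset (Nat.primeFactors_mono hd hN)
  intro p _ hp
  apply hf
  rw [Nat.mem_primeFactors] at hp
  push_neg at hp
  rcases Nat.eq_zero_or_pos ((Nat.factorization n) p) with h | h
  · exact h
  · exfalso
    have hprime : p.Prime := Nat.prime_of_mem_primeFactors
      (Nat.support_factorization n ▸ Finsupp.mem_support_iff.mpr (by omega))
    exact hn (hp hprime ((Nat.dvd_of_factorization_pos (by omega))))

lemma sum_facS_eq (hN : N ≠ 0) {n : ℕ} (hn : n ≠ 0) (hd : n ∣ N) :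
    ∑ q : {q : ℕ // q.Prime ∧ q ∣ N}, facS N n q = Om n := by
  simp only [facS_apply]
  rw [sum_primes_eq (fun p => (Nat.factorization n) p) hN hn hd (fun p h => h)]
  rw [Om, Finsupp.sum, Nat.support_factorization]

end AuxNat

section AuxEll

variable {𝕂 : Type*} [Field 𝕂] (ℓ : ℕ+ →* 𝕂ˣ)

lemma pnat_coe_prod {α : Type*} (s : Finset α) (f : α → ℕ+) :
    ((∏ i ∈ s, f i : ℕ+) : ℕ) = ∏ i ∈ s, (f i : ℕ) := by
  classical
  induction s using Finset.cons_induction with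
  | empty => simp
  | cons a s ha ih => rw [Finset.prod_cons, Finset.prod_cons, PNat.mul_coe, ih]

lemma pnat_eq_prod {n : ℕ} (hn : n ≠ 0) :
    (⟨n, Nat.pos_of_ne_zero hn⟩ : ℕ+) =
      ∏ p ∈ n.primeFactors.attach, (⟨p.1, (Nat.prime_of_mem_primeFactors p.2).pos⟩ : ℕ+)
        ^ (Nat.factorization n) p.1 := by
  apply PNat.coe_injective
  erw [pnat_coe_prod]
  show n = ∏ i ∈ n.primeFactors.attach, ((i : ℕ) ^ (Nat.factorization n) (i : ℕ))
  rw [Finset.prod_attach n.primeFactors (fun p => p ^ (Nat.factorization n) p)]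
  conv_lhs => rw [← Nat.factorization_prod_pow_eq_self hn]
  rw [Nat.prod_factorization_eq_prod_primeFactors]

lemma toPNat'_mk (p : ℕ) (hp : 0 < p) : p.toPNat' = (⟨p, hp⟩ : ℕ+) := by
  apply PNat.coe_injective
  show (p.toPNat' : ℕ) = p
  simp [Nat.toPNat']
  omega

lemma ell_eq_prod {N : ℕ} [Fintype {q : ℕ // q.Prime ∧ q ∣ N}] (hN : N ≠ 0) {n : ℕ}
    (hn : n ≠ 0) (hd : n ∣ N) :
    ((ℓ ⟨n, Nat.pos_of_ne_zero hn⟩ : 𝕂ˣ) : 𝕂) =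
      ∏ q : {q : ℕ // q.Prime ∧ q ∣ N},
        ((ℓ ⟨q.1, q.2.1.pos⟩ : 𝕂ˣ) : 𝕂) ^ (Nat.factorization n) q.1 := by
  set f : ℕ → 𝕂 := fun p => ((ℓ p.toPNat' : 𝕂ˣ) : 𝕂) ^ (Nat.factorization n) p with hf
  have hstep : ∀ (p : ℕ) (hp : 0 < p),
      f p = ((ℓ ⟨p, hp⟩ : 𝕂ˣ) : 𝕂) ^ (Nat.factorization n) p := by
    intro p hp
    rw [hf]
    simp only
    rw [toPNat'_mk p hp]
  rw [Finset.prod_congr rfl (fun (q : {q : ℕ // q.Prime ∧ q ∣ N}) _ =>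
    (hstep q.1 q.2.1.pos).symm)]
  rw [prod_primes_eq f hN hn hd (fun p hp => by simp [hf, hp])]
  have hmap := congrArg (fun u : ℕ+ => ((ℓ u : 𝕂ˣ) : 𝕂)) (pnat_eq_prod hn)
  beta_reduce at hmap
  erw [hmap, map_prod]
  erw [Units.coe_prod]
  erw [Finset.prod_congr rfl (fun i _ => congrArg Units.val (map_pow ℓ _ _))]
  simp only [Units.val_pow_eq_pow_val]
  push_cast
  erw [Finset.prod_congr rfl (fun (i : {x // x ∈ n.primeFactors}) _ =>
    (hstep i.1 (Nat.prime_of_mem_primeFactors i.2).pos).symm)]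
  rw [Finset.prod_attach n.primeFactors f]

end AuxEll

section AuxGroup

variable {E L : Type*} [Group E] [Group L]

lemma mem_graphL {f : L →* E} {p : E × L} : p ∈ graphL f ↔ f p.2 = p.1 := by
  constructor
  · rintro ⟨x, hx⟩
    simp only [MonoidHom.prod_apply, Prod.ext_iff, MonoidHom.id_apply] at hx
    obtain ⟨h1, h2⟩ := hx
    subst h2; exact h1
  · intro h
    exact ⟨p.2, by simp [MonoidHom.prod_apply, h]⟩

lemma mem_graphR {f : L →* E} {p : L × E} : p ∈ graphR f ↔ f p.1 = p.2 := by
  constructor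
  · rintro ⟨x, hx⟩
    simp only [MonoidHom.prod_apply, Prod.ext_iff, MonoidHom.id_apply] at hx
    obtain ⟨h1, h2⟩ := hx
    subst h1; exact h2
  · intro h
    exact ⟨p.1, by simp [MonoidHom.prod_apply, h]⟩

lemma k2_graphL (f : L →* E) : k2 (graphL f) = f.ker := by
  ext x
  simp [k2, mem_graphL, Subgroup.mem_comap, MonoidHom.mem_ker, eq_comm]

lemma k1_graphR (f : L →* E) : k1 (graphR f) = f.ker := by
  ext x
  simp [k1, mem_graphR, Subgroup.mem_comap, MonoidHom.mem_ker]

lemma mem_diag {e f : E} : (e, f) ∈ diagSubgroup E ↔ e = f := by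
  rw [diagSubgroup, mem_graphL]
  exact ⟨fun h => h.symm, fun h => h.symm⟩

lemma k1_mono {U U' : Subgroup (L × E)} (h : U ≤ U') : k1 U ≤ k1 U' :=
  Subgroup.comap_mono h

lemma k2_mono {U U' : Subgroup (E × L)} (h : U ≤ U') : k2 U ≤ k2 U' :=
  Subgroup.comap_mono h

lemma diag_le_star {φ : L →* E} (hφ : Function.Surjective φ) :
    diagSubgroup E ≤ starProd (graphL φ) (graphR φ) := by
  rintro ⟨e, e'⟩ hp
  obtain rfl : e = e' := mem_diag.mp hp
  obtain ⟨s, hs⟩ := hφ e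
  exact ⟨s, mem_graphL.mpr hs, mem_graphR.mpr hs⟩

/-- The rigidity lemma: if `(U, V)` is admissible, `ker φ = ker ψ`, and the kernels
are contained in `k₂ U` and `k₁ V`, then `ψ = φ`, `U = graphL φ` and `V = graphR φ`. -/
lemma rigidity {φ ψ : L →* E}
    {U : Subgroup (E × L)} {V : Subgroup (L × E)}
    (hU : U ≤ graphL φ) (hV : V ≤ graphR ψ)
    (hΔ : diagSubgroup E ≤ starProd U V)
    (hkU : φ.ker ≤ k2 U) (hkV : φ.ker ≤ k1 V)
    (hker : φ.ker = ψ.ker) :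
    ψ = φ ∧ U = graphL φ ∧ V = graphR φ := by
  have key : ∀ e : E, ∃ s : L, (e, s) ∈ U ∧ (s, e) ∈ V ∧ φ s = e ∧ ψ s = e := by
    intro e
    obtain ⟨s, hsU, hsV⟩ := hΔ (mem_diag.mpr rfl : (e, e) ∈ diagSubgroup E)
    exact ⟨s, hsU, hsV, mem_graphL.mp (hU hsU), mem_graphR.mp (hV hsV)⟩
  have hψφ : ψ = φ := by
    ext x
    obtain ⟨s, _, _, hφs, hψs⟩ := key (φ x)
    have hker1 : x * s⁻¹ ∈ φ.ker := by
      rw [MonoidHom.mem_ker, map_mul, map_inv, hφs, mul_inv_eq_one]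
    have hker2 : x * s⁻¹ ∈ ψ.ker := hker ▸ hker1
    have : ψ (x * s⁻¹) = 1 := hker2
    rw [map_mul, map_inv] at this
    rw [mul_inv_eq_one.mp this, hψs]
  subst hψφ
  refine ⟨rfl, le_antisymm hU ?_, le_antisymm hV ?_⟩
  · rintro ⟨e, x⟩ hp
    rw [mem_graphL] at hp
    obtain ⟨s, hsU, _, hφs, _⟩ := key e
    have h1 : ((1 : E), x * s⁻¹) ∈ U := by
      apply hkU
      rw [MonoidHom.mem_ker, map_mul, map_inv, hp, hφs, mul_inv_eq_one]
    have := mul_mem h1 hsU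
    simpa using this
  · rintro ⟨x, e⟩ hp
    rw [mem_graphR] at hp
    obtain ⟨s, _, hsV, hφs, _⟩ := key e
    have h1 : (x * s⁻¹, (1 : E)) ∈ V := by
      apply hkV
      rw [MonoidHom.mem_ker, map_mul, map_inv, hp, hφs, mul_inv_eq_one]
    have := mul_mem h1 hsV
    simpa using this

lemma card_ker_mul [Finite L] {φ : L →* E} (hφ : Function.Surjective φ) :
    Nat.card E * Nat.card φ.ker = Nat.card L := by
  rw [← Nat.card_congr (QuotientGroup.quotientKerEquivOfSurjective φ hφ).toEquiv]
  exact (Subgroup.card_eq_card_quotient_mul_card_subgroup φ.ker).symm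

end AuxGroup

/-- If the values of `ℓ` at the prime divisors of `|L|` are algebraically independent
over `ℚ`, then the matrix `T_E^L`, indexed by the surjections `L → E`, with
`(φ, ψ)`-entry `τ_{Δ(E)}^{◁(φ), ▷(ψ)}`, is invertible. -/
theorem det_tau_matrix_ne_zero {𝕂 : Type*} [Field 𝕂] [CharZero 𝕂] (ℓ : ℕ+ →* 𝕂ˣ)
    (E L : Type*) [Group E] [Group L] [Finite E] [Finite L]
    (hepi : ∃ f : L →* E, Function.Surjective f)
    (hind : AlgebraicIndependent ℚ fun q : {q : ℕ // q.Prime ∧ q ∣ Nat.card L} =>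
      ((ℓ ⟨q.1, q.2.1.pos⟩ : 𝕂ˣ) : 𝕂)) :
    (Matrix.of fun φ ψ : {f : L →* E // Function.Surjective f} =>
        tau ℓ (graphL φ.1) (graphR ψ.1) (diagSubgroup E)).det ≠ 0 := by
  classical
  obtain ⟨f₀, hf₀⟩ := hepi
  have hN : Nat.card L ≠ 0 := Nat.card_pos.ne'
  haveI : Finite {q : ℕ // q.Prime ∧ q ∣ Nat.card L} := finite_primes hN
  haveI : Fintype {q : ℕ // q.Prime ∧ q ∣ Nat.card L} := Fintype.ofFinite _
  set x : {q : ℕ // q.Prime ∧ q ∣ Nat.card L} → 𝕂 :=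
    fun q => ((ℓ ⟨q.1, q.2.1.pos⟩ : 𝕂ˣ) : 𝕂) with hxdef
  have hinj : Function.Injective (MvPolynomial.aeval (R := ℚ) x) :=
    algebraicIndependent_iff_injective_aeval.mp hind
  -- the common kernel cardinality
  set m := Nat.card L / Nat.card E with hmdef
  have hE : Nat.card E ≠ 0 := Nat.card_pos.ne'
  have hker : ∀ f : {f : L →* E // Function.Surjective f}, Nat.card f.1.ker = m := by
    intro f
    rw [hmdef, ← card_ker_mul f.2, Nat.mul_div_cancel_left _ (Nat.pos_of_ne_zero hE)]
  have hm0 : m ≠ 0 := by rw [← hker ⟨f₀, hf₀⟩]; exact Nat.card_pos.ne'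
  have hmN : m ∣ Nat.card L := by
    rw [← hker ⟨f₀, hf₀⟩]; exact Subgroup.card_subgroup_dvd_card _
  set K := Om m with hKdef
  -- the admissible sets are finite
  have hSfin : ∀ (I : Subgroup (E × L)) (J : Subgroup (L × E)),
      ({q : Subgroup (E × L) × Subgroup (L × E) |
        q.1 ≤ I ∧ q.2 ≤ J ∧ diagSubgroup E ≤ starProd q.1 q.2}).Finite :=
    fun I J => Set.toFinite _
  have hd0 : ∀ q : Subgroup (E × L) × Subgroup (L × E),
      Nat.card ↥(k2 q.1 ⊓ k1 q.2) ≠ 0 := fun q => Nat.card_pos.ne'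
  have hdN : ∀ q : Subgroup (E × L) × Subgroup (L × E),
      Nat.card ↥(k2 q.1 ⊓ k1 q.2) ∣ Nat.card L := fun q =>
    Subgroup.card_subgroup_dvd_card _
  -- the polynomial lift of the matrix
  set Pm : Matrix {f : L →* E // Function.Surjective f} {f : L →* E // Function.Surjective f}
      (MvPolynomial {q : ℕ // q.Prime ∧ q ∣ Nat.card L} ℚ) :=
    Matrix.of fun φ ψ => ∑ q ∈ (hSfin (graphL φ.1) (graphR ψ.1)).toFinset,
      MvPolynomial.C ((moeb q.1 (graphL φ.1) * moeb q.2 (graphR ψ.1) : ℤ) : ℚ) *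
        MvPolynomial.monomial (facS (Nat.card L) (Nat.card ↥(k2 q.1 ⊓ k1 q.2))) 1 with hPm
  -- `aeval x` recovers the original matrix
  have htau : ∀ φ ψ : {f : L →* E // Function.Surjective f},
      MvPolynomial.aeval x (Pm φ ψ) = tau ℓ (graphL φ.1) (graphR ψ.1) (diagSubgroup E) := by
    intro φ ψ
    rw [tau, finsum_mem_eq_finite_toFinset_sum _ (hSfin (graphL φ.1) (graphR ψ.1)), hPm]
    rw [Matrix.of_apply, map_sum]
    apply Finset.sum_congr rfl
    intro q hq
    rw [map_mul, MvPolynomial.aeval_C, MvPolynomial.aeval_monomial,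
      Finsupp.prod_fintype _ _ (fun q => pow_zero _)]
    have hsig : sigmaC ℓ q.1 q.2 =
        ((ℓ ⟨Nat.card ↥(k2 q.1 ⊓ k1 q.2), Nat.pos_of_ne_zero (hd0 q)⟩ : 𝕂ˣ) : 𝕂) := rfl
    rw [hsig, ell_eq_prod ℓ hN (hd0 q) (hdN q)]
    simp only [facS_apply, map_one, mul_one, hxdef]
    rw [show (algebraMap ℚ 𝕂) ((moeb q.1 (graphL φ.1) * moeb q.2 (graphR ψ.1) : ℤ) : ℚ)
        = ((moeb q.1 (graphL φ.1) : 𝕂) * (moeb q.2 (graphR ψ.1) : 𝕂)) by push_cast; simp]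
    ring
  -- the collapsing homomorphism to a univariate polynomial ring
  set g : MvPolynomial {q : ℕ // q.Prime ∧ q ∣ Nat.card L} ℚ →ₐ[ℚ] Polynomial ℚ :=
    MvPolynomial.aeval (fun _ => Polynomial.X) with hgdef
  have hgterm : ∀ (r : ℚ) (n : ℕ), n ≠ 0 → n ∣ Nat.card L →
      g (MvPolynomial.C r * MvPolynomial.monomial (facS (Nat.card L) n) 1)
        = Polynomial.C r * Polynomial.X ^ Om n := by
    intro r n hn hdv
    rw [hgdef, map_mul, MvPolynomial.aeval_C, MvPolynomial.aeval_monomial,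
      Finsupp.prod_fintype _ _ (fun q => pow_zero _), Finset.prod_pow_eq_pow_sum,
      sum_facS_eq hN hn hdv, map_one, one_mul, Polynomial.algebraMap_eq]
  -- divisibility of the exponents
  have hdvdm : ∀ (φ ψ : {f : L →* E // Function.Surjective f})
      (q : Subgroup (E × L) × Subgroup (L × E)),
      q ∈ (hSfin (graphL φ.1) (graphR ψ.1)).toFinset →
      Nat.card ↥(k2 q.1 ⊓ k1 q.2) ∣ m := by
    intro φ ψ q hq
    obtain ⟨h1, _, _⟩ := (Set.Finite.mem_toFinset _).mp hq
    have hA1 : k2 q.1 ⊓ k1 q.2 ≤ φ.1.ker :=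
      inf_le_left.trans ((k2_mono h1).trans (k2_graphL φ.1).le)
    exact (hker φ) ▸ Subgroup.card_dvd_of_le hA1
  -- the key rigidity consequence
  have hmain : ∀ (φ ψ : {f : L →* E // Function.Surjective f})
      (q : Subgroup (E × L) × Subgroup (L × E)),
      q ∈ (hSfin (graphL φ.1) (graphR ψ.1)).toFinset →
      Om (Nat.card ↥(k2 q.1 ⊓ k1 q.2)) = K →
      ψ.1 = φ.1 ∧ q.1 = graphL φ.1 ∧ q.2 = graphR φ.1 := by
    intro φ ψ q hq hOm
    obtain ⟨h1, h2, h3⟩ := (Set.Finite.mem_toFinset _).mp hq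
    have hA1 : k2 q.1 ⊓ k1 q.2 ≤ φ.1.ker :=
      inf_le_left.trans ((k2_mono h1).trans (k2_graphL φ.1).le)
    have hA2 : k2 q.1 ⊓ k1 q.2 ≤ ψ.1.ker :=
      inf_le_right.trans ((k1_mono h2).trans (k1_graphR ψ.1).le)
    have hdm : Nat.card ↥(k2 q.1 ⊓ k1 q.2) = m := by
      by_contra hne
      exact absurd hOm (Om_lt_of_dvd_ne hm0 (hdvdm φ ψ q hq) hne).ne
    have hAk1 : k2 q.1 ⊓ k1 q.2 = φ.1.ker :=
      sub_eq_of_le_card hA1 (by rw [hker φ, ← hdm])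
    have hAk2 : k2 q.1 ⊓ k1 q.2 = ψ.1.ker :=
      sub_eq_of_le_card hA2 (by rw [hker ψ, ← hdm])
    have hkk : φ.1.ker = ψ.1.ker := by rw [← hAk1, hAk2]
    exact rigidity h1 h2 h3 (hAk1 ▸ inf_le_left) (hAk1 ▸ inf_le_right) hkk
  -- the top coefficient of each entry
  have hcoeff : ∀ φ ψ : {f : L →* E // Function.Surjective f},
      (g (Pm φ ψ)).coeff K = if φ = ψ then 1 else 0 := by
    intro φ ψ
    rw [hPm, Matrix.of_apply, map_sum]
    rw [Finset.sum_congr rfl (fun q hq => hgterm _ _ (hd0 q)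
      (hdN q))]
    rw [Polynomial.finset_sum_coeff]
    simp only [Polynomial.coeff_C_mul, Polynomial.coeff_X_pow]
    by_cases hφψ : φ = ψ
    · subst hφψ
      rw [if_pos rfl]
      have hmem : (graphL φ.1, graphR φ.1) ∈ (hSfin (graphL φ.1) (graphR φ.1)).toFinset := by
        rw [Set.Finite.mem_toFinset]
        exact ⟨le_refl _, le_refl _, diag_le_star φ.2⟩
      rw [Finset.sum_eq_single_of_mem _ hmem]
      · have hdpair : Nat.card ↥(k2 (graphL φ.1, graphR φ.1).1 ⊓ k1 (graphL φ.1, graphR φ.1).2)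
            = m := by
          show Nat.card ↥(k2 (graphL φ.1) ⊓ k1 (graphR φ.1)) = m
          rw [k2_graphL, k1_graphR, inf_idem, hker φ]
        rw [hdpair, if_pos rfl, moeb_self, moeb_self]
        norm_num
      · intro q hq hqne
        rcases eq_or_ne K (Om (Nat.card ↥(k2 q.1 ⊓ k1 q.2))) with hOm | hOm
        · exfalso
          obtain ⟨_, hq1, hq2⟩ := hmain φ φ q hq hOm.symm
          exact hqne (Prod.ext hq1 hq2)
        · rw [if_neg hOm, mul_zero]
    · rw [if_neg hφψ]
      apply Finset.sum_eq_zero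
      intro q hq
      rcases eq_or_ne K (Om (Nat.card ↥(k2 q.1 ⊓ k1 q.2))) with hOm | hOm
      · exfalso
        obtain ⟨hψφ, _, _⟩ := hmain φ ψ q hq hOm.symm
        exact hφψ (Subtype.ext hψφ.symm)
      · rw [if_neg hOm, mul_zero]
  -- degree bound for each entry
  have hdeg : ∀ φ ψ : {f : L →* E // Function.Surjective f},
      (g (Pm φ ψ)).natDegree ≤ K := by
    intro φ ψ
    rw [hPm, Matrix.of_apply, map_sum,
      Finset.sum_congr rfl (fun q hq => hgterm _ _ (hd0 q) (hdN q))]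
    apply Polynomial.natDegree_sum_le_of_forall_le
    intro q hq
    refine (Polynomial.natDegree_C_mul_le _ _).trans ?_
    rw [Polynomial.natDegree_X_pow]
    exact Om_le_of_dvd hm0 (hdvdm φ ψ q hq)
  -- the determinant of the collapsed matrix is nonzero
  have hdetQ : (Pm.map g).det ≠ 0 := by
    intro h0
    have hc := congrArg (fun p => Polynomial.coeff p
      (Fintype.card {f : L →* E // Function.Surjective f} * K)) h0
    simp only [Polynomial.coeff_zero] at hc
    apply one_ne_zero (α := ℚ)
    rw [show (1 : ℚ) = Polynomial.coeff (Pm.map g).det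
        (Fintype.card {f : L →* E // Function.Surjective f} * K) from ?_, hc]
    rw [Matrix.det_apply, Polynomial.finset_sum_coeff]
    have hterm : ∀ σ : Equiv.Perm {f : L →* E // Function.Surjective f},
        Polynomial.coeff (Equiv.Perm.sign σ • ∏ i, (Pm.map g) (σ i) i)
          (Fintype.card {f : L →* E // Function.Surjective f} * K)
          = if σ = 1 then 1 else 0 := by
      intro σ
      rw [Polynomial.coeff_smul]
      have hprod : Polynomial.coeff (∏ i, (Pm.map g) (σ i) i)
          (Fintype.card {f : L →* E // Function.Surjective f} * K)
          = ∏ i, Polynomial.coeff ((Pm.map g) (σ i) i) K := by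
        rw [← Finset.card_univ]
        exact Polynomial.coeff_prod_of_natDegree_le _ _ _ (fun i _ => hdeg (σ i) i)
      rw [hprod]
      have : ∀ i, Polynomial.coeff ((Pm.map g) (σ i) i) K
          = if σ i = i then (1 : ℚ) else 0 := fun i => hcoeff (σ i) i
      rw [Finset.prod_congr rfl (fun i _ => this i)]
      by_cases hσ : σ = 1
      · subst hσ; simp
      · have : ∃ i, σ i ≠ i := by
          by_contra hco
          push_neg at hco
          exact hσ (Equiv.ext hco)
        obtain ⟨i, hi⟩ := this
        have hzero : (∏ i : {f : L →* E // Function.Surjective f},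
            if σ i = i then (1 : ℚ) else 0) = 0 :=
          Finset.prod_eq_zero (Finset.mem_univ i) (if_neg hi)
        rw [hzero, if_neg hσ]
        simp
    rw [Finset.sum_congr rfl (fun σ _ => hterm σ)]
    rw [Finset.sum_ite_eq' Finset.univ (1 : Equiv.Perm {f : L →* E // Function.Surjective f})
      (fun _ => (1 : ℚ))]
    simp
  have hdetPm : Pm.det ≠ 0 := by
    intro h0
    apply hdetQ
    have h1 : (Pm.map ⇑g).det = g.toRingHom Pm.det := by
      rw [show Pm.map ⇑g = g.toRingHom.mapMatrix Pm from rfl]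
      exact (RingHom.map_det _ _).symm
    rw [h1, show Pm.det = 0 from h0, map_zero]
  -- conclude
  intro h0
  apply hdetPm
  apply hinj
  rw [map_zero]
  have hmat : Pm.map (MvPolynomial.aeval x) = Matrix.of
      (fun φ ψ : {f : L →* E // Function.Surjective f} =>
        tau ℓ (graphL φ.1) (graphR ψ.1) (diagSubgroup E)) := by
    ext φ ψ
    exact htau φ ψ
  calc (MvPolynomial.aeval x) Pm.det
      = (Pm.map ⇑(MvPolynomial.aeval (R := ℚ) x)).det := by
        rw [show Pm.map ⇑(MvPolynomial.aeval (R := ℚ) x)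
          = (MvPolynomial.aeval (R := ℚ) x).toRingHom.mapMatrix Pm from rfl]
        exact RingHom.map_det _ _
    _ = 0 := by rw [hmat, h0]

end SubgroupCat
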